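/- arXiv:1006.4696 — 6 statements merged into one kernel-verified Lean document; each statement's English description precedes it below -/
import Mathlib

section
/- In a unit-demand market with buyers I, goods J, and strictly decreasing continuous utility functions u_i^j, if W and W' are two competitive equilibria with price vectors p, p' and payoff vectors u, u', then the pointwise minimum of prices min(p^j, p'^j) together with the pointwise maximum of payoffs max(u_i, u'_i) forms a competitive equilibrium (with supporting matching assigning each buyer i the good μ(i) if u_i ≥ u'_i and μ'(i) otherwise, where μ, μ' support W, W'). -/
attribute [local instance] Classical.propDecidable

/-- A unit-demand market: finite sets of buyers `I` and goods `J`, with utility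
functions `u i j : ℝ → ℝ` that are continuous, strictly decreasing, surjective
(domain and range cover all of `ℝ`), and eventually non-positive. -/
structure Market (I J : Type) [Fintype I] [Fintype J] where
  u : I → J → ℝ → ℝ
  cont : ∀ i j, Continuous (u i j)
  anti : ∀ i j, StrictAnti (u i j)
  surj : ∀ i j, Function.Surjective (u i j)
  evNonpos : ∀ i j, ∃ x : ℝ, ∀ y ≥ x, u i j y ≤ 0

/-- A competitive equilibrium: nonnegative prices `p`, nonnegative payoffs `w`,
and a partial matching `μ` (injective on matched buyers) such that every buyer
receives a most preferred good at the prices, unmatched buyers have payoff `0`,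
and unmatched goods have price `0`. -/
def IsEquilib {I J : Type} [Fintype I] [Fintype J] (M : Market I J)
    (p : J → ℝ) (w : I → ℝ) (μ : I → Option J) : Prop :=
  (∀ i i' j, μ i = some j → μ i' = some j → i = i') ∧
  (∀ j, 0 ≤ p j) ∧ (∀ i, 0 ≤ w i) ∧
  (∀ i j, μ i = some j → w i = M.u i j (p j)) ∧
  (∀ i j, M.u i j (p j) ≤ w i) ∧
  (∀ i, μ i = none → w i = 0) ∧
  (∀ j, (∀ i, μ i ≠ some j) → p j = 0)

/-- `W` is the lowest competitive equilibrium: its prices are componentwise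
below those of every competitive equilibrium. -/
def IsLowest {I J : Type} [Fintype I] [Fintype J] (M : Market I J)
    (p : J → ℝ) (w : I → ℝ) (μ : I → Option J) : Prop :=
  IsEquilib M p w μ ∧ ∀ p' w' μ', IsEquilib M p' w' μ' → ∀ j, p j ≤ p' j

/-- `W` is the highest competitive equilibrium: its prices are componentwise
above those of every competitive equilibrium. -/
def IsHighest {I J : Type} [Fintype I] [Fintype J] (M : Market I J)
    (p : J → ℝ) (w : I → ℝ) (μ : I → Option J) : Prop :=
  IsEquilib M p w μ ∧ ∀ p' w' μ', IsEquilib M p' w' μ' → ∀ j, p' j ≤ p j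

/-- Induced payoff `u_i(p) = max({u_i^j(p^j) : j} ∪ {0})`. -/
noncomputable def inducedPayoff {I J : Type} [Fintype I] [Fintype J] (M : Market I J)
    (p : J → ℝ) (i : I) : ℝ :=
  (insert (0:ℝ) (Finset.univ.image fun j => M.u i j (p j))).max' (Finset.insert_nonempty _ _)

/-- Induced price `p^j(u) = max({p_i^j(u_i) : i} ∪ {0})`, where `p_i^j` is the
inverse of `u_i^j`. -/
noncomputable def inducedPrice {I J : Type} [Fintype I] [Fintype J] (M : Market I J)
    (w : I → ℝ) (j : J) : ℝ :=
  (insert (0:ℝ) (Finset.univ.image fun i => Function.invFun (M.u i j) (w i))).max' (Finset.insert_nonempty _ _)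

/-- The pointwise minimum of prices and pointwise maximum of payoffs of two
competitive equilibria, with the indicated supporting matching, is again a
competitive equilibrium. -/
theorem lattice_inf {I J : Type} [Fintype I] [Fintype J] (M : Market I J)
    (p p' : J → ℝ) (w w' : I → ℝ) (μ μ' : I → Option J)
    (h : IsEquilib M p w μ) (h' : IsEquilib M p' w' μ') :
    IsEquilib M (fun j => min (p j) (p' j)) (fun i => max (w i) (w' i))
      (fun i => if w' i ≤ w i then μ i else μ' i) := by
  obtain ⟨hinj, hp, hw, hm, he, hub, hug⟩ := h
  obtain ⟨hinj', hp', hw', hm', he', hub', hug'⟩ := h'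
  -- Key monotonicity facts
  have K1 : ∀ i j, w' i ≤ w i → μ i = some j → p j ≤ p' j := by
    intro i j hle hμ
    have hle2 : M.u i j (p' j) ≤ M.u i j (p j) :=
      (he' i j).trans (hle.trans_eq (hm i j hμ))
    exact ((M.anti i j).le_iff_ge).mp hle2
  have K2 : ∀ i j, w i < w' i → μ' i = some j → p' j < p j := by
    intro i j hlt hμ
    have hlt2 : M.u i j (p j) < M.u i j (p' j) :=
      lt_of_le_of_lt (he i j) (hlt.trans_eq (hm' i j hμ))
    exact ((M.anti i j).lt_iff_gt).mp hlt2
  -- The sets of buyers strictly better off under W' and goods strictly cheaper under W'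
  set B : Finset I := Finset.univ.filter (fun i => w i < w' i) with hBdef
  set S : Finset J := Finset.univ.filter (fun j => p' j < p j) with hSdef
  have memB : ∀ i, i ∈ B ↔ w i < w' i := by
    intro i; simp [hBdef]
  have memS : ∀ j, j ∈ S ↔ p' j < p j := by
    intro j; simp [hSdef]
  have LA : ∀ i ∈ B, ∃ j ∈ S, μ' i = some j := by
    intro i hi
    have hlt : w i < w' i := (memB i).mp hi
    cases hμ' : μ' i with
    | none =>
      have := hub' i hμ'
      have := hw i
      exact absurd this (by linarith)
    | some j =>
      exact ⟨j, (memS j).mpr (K2 i j hlt hμ'), rfl⟩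
  have LB : ∀ j ∈ S, ∃ i ∈ B, μ i = some j := by
    intro j hj
    have hlt : p' j < p j := (memS j).mp hj
    have hpj : p j ≠ 0 := by have := hp' j; linarith
    have hex : ∃ i, μ i = some j := by
      by_contra hcon
      push_neg at hcon
      exact hpj (hug j hcon)
    obtain ⟨i, hi⟩ := hex
    refine ⟨i, (memB i).mpr ?_, hi⟩
    calc w i = M.u i j (p j) := hm i j hi
      _ < M.u i j (p' j) := M.anti i j hlt
      _ ≤ w' i := he' i j
  -- cardinality bookkeeping
  have hBS : B.image μ' ⊆ S.image some := by
    intro x hx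
    obtain ⟨i, hi, rfl⟩ := Finset.mem_image.mp hx
    obtain ⟨j, hj, hji⟩ := LA i hi
    rw [hji]
    exact Finset.mem_image_of_mem some hj
  have hSB : S.image some ⊆ B.image μ := by
    intro x hx
    obtain ⟨j, hj, rfl⟩ := Finset.mem_image.mp hx
    obtain ⟨i, hi, hij⟩ := LB j hj
    exact Finset.mem_image.mpr ⟨i, hi, hij⟩
  have hinjOn : Set.InjOn μ' ↑B := by
    intro i hi i' hi' heq
    obtain ⟨j, _, hji⟩ := LA i hi
    exact hinj' i i' j hji (heq ▸ hji)
  have hc1 : (B.image μ').card = B.card := Finset.card_image_of_injOn hinjOn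
  have hc2 : (S.image some).card = S.card :=
    Finset.card_image_of_injective _ (Option.some_injective J)
  have hc3 : S.card ≤ B.card := by
    calc S.card = (S.image some).card := hc2.symm
      _ ≤ (B.image μ).card := Finset.card_le_card hSB
      _ ≤ B.card := Finset.card_image_le
  have hc4 : B.card ≤ S.card := by
    calc B.card = (B.image μ').card := hc1.symm
      _ ≤ (S.image some).card := Finset.card_le_card hBS
      _ = S.card := hc2
  have hcardEq : B.card = S.card := le_antisymm hc4 hc3
  have eqA : B.image μ' = S.image some :=
    Finset.eq_of_subset_of_card_le hBS (by rw [hc1, hc2, hcardEq])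
  have eqB : S.image some = B.image μ :=
    Finset.eq_of_subset_of_card_le hSB
      (le_trans Finset.card_image_le (by rw [hc2, hcardEq]))
  refine ⟨?_, ?_, ?_, ?_, ?_, ?_, ?_⟩
  · -- injectivity
    intro i i' j hi hi'
    by_cases c : w' i ≤ w i <;> by_cases c' : w' i' ≤ w i' <;>
      simp only [if_pos, if_neg, c, c', if_true, if_false, ite_true, ite_false] at hi hi'
    · exact hinj i i' j hi hi'
    · have h1 := K1 i j c hi
      have h2 := K2 i' j (not_le.mp c') hi'
      linarith
    · have h1 := K1 i' j c' hi'
      have h2 := K2 i j (not_le.mp c) hi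
      linarith
    · exact hinj' i i' j hi hi'
  · intro j; exact le_min (hp j) (hp' j)
  · intro i; exact le_trans (hw i) (le_max_left _ _)
  · -- matched payoff
    intro i j hij
    show max (w i) (w' i) = M.u i j (min (p j) (p' j))
    by_cases c : w' i ≤ w i
    · simp only [if_pos c] at hij
      rw [min_eq_left (K1 i j c hij), max_eq_left c]
      exact hm i j hij
    · simp only [if_neg c] at hij
      have hlt := not_le.mp c
      rw [min_eq_right (le_of_lt (K2 i j hlt hij)), max_eq_right (le_of_lt hlt)]
      exact hm' i j hij
  · -- envy-freeness
    intro i j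
    show M.u i j (min (p j) (p' j)) ≤ max (w i) (w' i)
    rcases le_total (p j) (p' j) with hle | hle
    · rw [min_eq_left hle]
      exact (he i j).trans (le_max_left _ _)
    · rw [min_eq_right hle]
      exact (he' i j).trans (le_max_right _ _)
  · -- unmatched buyers
    intro i hi
    by_cases c : w' i ≤ w i
    · simp only [if_pos c] at hi
      have h1 := hub i hi
      have h2 : w' i = 0 := le_antisymm (by rw [← h1]; exact c) (hw' i)
      simp [h1, h2]
    · simp only [if_neg c] at hi
      have := hub' i hi
      have := hw i
      exact absurd (not_le.mp c) (by linarith)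
  · -- unmatched goods
    intro j hj
    rcases lt_or_ge (p' j) (p j) with hlt | hle
    · exfalso
      have hjS : some j ∈ B.image μ' := by
        rw [eqA]
        exact Finset.mem_image_of_mem some ((memS j).mpr hlt)
      obtain ⟨i, hiB, hiμ⟩ := Finset.mem_image.mp hjS
      have hc : ¬ (w' i ≤ w i) := not_le.mpr ((memB i).mp hiB)
      exact hj i (by simp only [if_neg hc]; exact hiμ)
    · have hnone : ∀ i, μ i ≠ some j := by
        intro i hij
        by_cases c : w' i ≤ w i
        · exact hj i (by simp only [if_pos c]; exact hij)
        · have hiB : i ∈ B := (memB i).mpr (not_le.mp c)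
          have hmem : μ i ∈ S.image some := by
            rw [eqB]
            exact Finset.mem_image_of_mem μ hiB
          obtain ⟨j', hj', hjj⟩ := Finset.mem_image.mp hmem
          rw [hij] at hjj
          have : j' = j := Option.some_injective _ hjj
          subst this
          exact absurd ((memS j').mp hj') (not_lt.mpr hle)
      simp only [min_eq_left hle]
      exact hug j hnone
end

section
/- In a unit-demand market, the pointwise maximum of prices max(p^j, p'^j) of two competitive equilibria, together with the pointwise minimum of payoffs min(u_i, u'_i), forms a competitive equilibrium. Consequently, the set of competitive equilibria, partially ordered by componentwise comparison of price vectors, forms a lattice. -/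
attribute [local instance] Classical.propDecidable

lemma key {I J : Type} [Fintype I] [Fintype J] (M : Market I J)
    (p p' : J → ℝ) (w w' : I → ℝ) (μ μ' : I → Option J)
    (h : IsEquilib M p w μ) (h' : IsEquilib M p' w' μ') :
    (∀ i j, w i < w' i → μ' i = some j → p' j < p j) ∧
    (∀ i j, p' j < p j → μ i = some j → w i < w' i) ∧
    (∀ i j, w i < w' i → μ i = some j → p' j < p j) ∧
    (∀ i j, p' j < p j → μ' i = some j → w i < w' i) := by
  classical
  obtain ⟨inj, pnn, wnn, meq, best, bun, gun⟩ := h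
  obtain ⟨inj', pnn', wnn', meq', best', bun', gun'⟩ := h'
  have hA' : ∀ i j, w i < w' i → μ' i = some j → p' j < p j := by
    intro i j hi hj
    have h1 : w' i = M.u i j (p' j) := meq' i j hj
    have h2 : M.u i j (p j) ≤ w i := best i j
    have h3 : M.u i j (p j) < M.u i j (p' j) := by linarith
    exact ((M.anti i j).lt_iff_gt).mp h3
  have hB' : ∀ i j, p' j < p j → μ i = some j → w i < w' i := by
    intro i j hjS hij
    have h1 : w i = M.u i j (p j) := meq i j hij
    have h2 : M.u i j (p' j) ≤ w' i := best' i j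
    have h3 : M.u i j (p j) < M.u i j (p' j) := M.anti i j hjS
    linarith
  have hAex : ∀ i, w i < w' i → ∃ j, μ' i = some j := by
    intro i hi
    cases hμ : μ' i with
    | none => exact absurd (bun' i hμ) (by have := wnn i; intro hc; linarith)
    | some j => exact ⟨j, rfl⟩
  have hBex : ∀ j, p' j < p j → ∃ i, μ i = some j := by
    intro j hjS
    by_contra hc
    push_neg at hc
    have := gun j hc
    have := pnn' j
    linarith
  -- main counting argument, under nonemptiness
  have main : ∀ (_ : Nonempty I) (_ : Nonempty J),
      (∀ i j, w i < w' i → μ i = some j → p' j < p j) ∧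
      (∀ i j, p' j < p j → μ' i = some j → w i < w' i) := by
    intro hI hJ
    set T : Finset I := Finset.univ.filter (fun i => w i < w' i) with hTdef
    set S : Finset J := Finset.univ.filter (fun j => p' j < p j) with hSdef
    set f : I → J := fun i => (μ' i).getD (Classical.arbitrary J) with hfdef
    set g : J → I := fun j =>
      if hx : ∃ i, μ i = some j ∧ w i < w' i then hx.choose else Classical.arbitrary I
      with hgdef
    have hfmem : ∀ i ∈ T, μ' i = some (f i) ∧ f i ∈ S := by
      intro i hi
      have hiT : w i < w' i := by simpa [hTdef] using hi
      obtain ⟨j, hj⟩ := hAex i hiT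
      have hfi : f i = j := by simp [hfdef, hj]
      refine ⟨by rw [hfi]; exact hj, ?_⟩
      rw [hfi]
      simp only [hSdef, Finset.mem_filter, Finset.mem_univ, true_and]
      exact hA' i j hiT hj
    have hgmem : ∀ j ∈ S, μ (g j) = some j ∧ g j ∈ T := by
      intro j hj
      have hjS : p' j < p j := by simpa [hSdef] using hj
      obtain ⟨i, hi⟩ := hBex j hjS
      have hx : ∃ i, μ i = some j ∧ w i < w' i := ⟨i, hi, hB' i j hjS hi⟩
      have hg : g j = hx.choose := by simp [hgdef, hx]
      obtain ⟨h1, h2⟩ := hx.choose_spec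
      refine ⟨by rw [hg]; exact h1, ?_⟩
      rw [hg]
      simp only [hTdef, Finset.mem_filter, Finset.mem_univ, true_and]
      exact h2
    have hinjf : Set.InjOn f T := by
      intro i1 h1 i2 h2 he
      apply inj' i1 i2 (f i1) (hfmem i1 h1).1
      rw [he]; exact (hfmem i2 h2).1
    have hinjg : Set.InjOn g S := by
      intro j1 h1 j2 h2 he
      have e1 := (hgmem j1 h1).1
      have e2 := (hgmem j2 h2).1
      rw [he, e2] at e1
      exact (Option.some_inj.mp e1).symm
    have hTS : T.card ≤ S.card :=
      Finset.card_le_card_of_injOn f (fun i hi => (hfmem i hi).2) hinjf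
    have hST : S.card ≤ T.card :=
      Finset.card_le_card_of_injOn g (fun j hj => (hgmem j hj).2) hinjg
    constructor
    · intro i0 j0 hi0T hij0
      have hi0 : i0 ∈ T := by simp [hTdef, hi0T]
      obtain ⟨j, hjS, he⟩ := Finset.surj_on_of_inj_on_of_card_le (fun j (_ : j ∈ S) => g j)
        (fun j hj => (hgmem j hj).2) (fun a b ha hb he => hinjg ha hb he) hTS i0 hi0
      have : μ i0 = some j := by rw [he]; exact (hgmem j hjS).1
      rw [hij0] at this
      have : j0 = j := Option.some_inj.mp this
      subst this
      simpa [hSdef] using hjS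
    · intro i0 j0 hj0S hij0
      have hj0 : j0 ∈ S := by simp [hSdef, hj0S]
      obtain ⟨i, hiT, he⟩ := Finset.surj_on_of_inj_on_of_card_le (fun i (_ : i ∈ T) => f i)
        (fun i hi => (hfmem i hi).2) (fun a b ha hb he => hinjf ha hb he) hST j0 hj0
      have hμi : μ' i = some j0 := by rw [he]; exact (hfmem i hiT).1
      have : i0 = i := inj' i0 i j0 hij0 hμi
      subst this
      simpa [hTdef] using hiT
  refine ⟨hA', hB', ?_, ?_⟩
  · intro i j hi hij
    exact (main ⟨i⟩ ⟨j⟩).1 i j hi hij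
  · intro i j hj hij
    exact (main ⟨i⟩ ⟨j⟩).2 i j hj hij

/-- The pointwise maximum of prices and pointwise minimum of payoffs of two
competitive equilibria is again a competitive equilibrium; together with the
corresponding statement for pointwise min/max, the set of competitive
equilibria ordered componentwise by prices forms a lattice. -/
theorem lattice_sup {I J : Type} [Fintype I] [Fintype J] (M : Market I J)
    (p p' : J → ℝ) (w w' : I → ℝ) (μ μ' : I → Option J)
    (h : IsEquilib M p w μ) (h' : IsEquilib M p' w' μ') :
    IsEquilib M (fun j => max (p j) (p' j)) (fun i => min (w i) (w' i))
      (fun i => if w i < w' i then μ i else μ' i)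
    ∧
    IsEquilib M (fun j => min (p j) (p' j)) (fun i => max (w i) (w' i))
      (fun i => if w' i ≤ w i then μ i else μ' i) := by
  classical
  obtain ⟨hA, hB, hC, hD⟩ := key M p p' w w' μ μ' h h'
  obtain ⟨inj, pnn, wnn, meq, best, bun, gun⟩ := h
  obtain ⟨inj', pnn', wnn', meq', best', bun', gun'⟩ := h'
  constructor
  · refine ⟨?_, ?_, ?_, ?_, ?_, ?_, ?_⟩
    · -- injectivity
      intro i i' j hi hi'
      simp only at hi hi'
      by_cases hT : w i < w' i <;> by_cases hT' : w i' < w' i' <;>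
        simp only [if_pos, if_neg, hT, hT', if_true, if_false] at hi hi'
      · exact inj i i' j hi hi'
      · exfalso; exact hT' (hD i' j (hC i j hT hi) hi')
      · exfalso; exact hT (hD i j (hC i' j hT' hi') hi)
      · exact inj' i i' j hi hi'
    · intro j; exact le_trans (pnn j) (le_max_left _ _)
    · intro i; exact le_min (wnn i) (wnn' i)
    · intro i j hij
      simp only at hij ⊢
      by_cases hT : w i < w' i <;> simp only [hT, if_true, if_false] at hij
      · have hS : p' j < p j := hC i j hT hij
        rw [max_eq_left hS.le, min_eq_left hT.le]
        exact meq i j hij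
      · have hS : ¬ p' j < p j := fun hS => hT (hD i j hS hij)
        rw [max_eq_right (not_lt.mp hS), min_eq_right (not_lt.mp hT)]
        exact meq' i j hij
    · intro i j
      simp only
      have h1 : M.u i j (max (p j) (p' j)) ≤ M.u i j (p j) :=
        (M.anti i j).antitone (le_max_left _ _)
      have h2 : M.u i j (max (p j) (p' j)) ≤ M.u i j (p' j) :=
        (M.anti i j).antitone (le_max_right _ _)
      exact le_min (le_trans h1 (best i j)) (le_trans h2 (best' i j))
    · intro i hi
      simp only at hi ⊢
      by_cases hT : w i < w' i <;> simp only [hT, if_true, if_false] at hi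
      · rw [min_eq_left hT.le]; exact bun i hi
      · rw [min_eq_right (not_lt.mp hT)]; exact bun' i hi
    · intro j hj
      simp only at hj ⊢
      have hpj : p j = 0 := by
        by_contra hne
        have hppos : 0 < p j := (pnn j).lt_of_ne (Ne.symm hne)
        have hex : ∃ i, μ i = some j := by
          by_contra hc; push_neg at hc; exact hne (gun j hc)
        obtain ⟨i, hi⟩ := hex
        have hiT : ¬ w i < w' i := fun hT => hj i (by simp [hT, hi])
        have hple : ¬ p' j < p j := fun hS => hiT (hB i j hS hi)
        have hp'pos : 0 < p' j := lt_of_lt_of_le hppos (not_lt.mp hple)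
        have hex' : ∃ i', μ' i' = some j := by
          by_contra hc; push_neg at hc
          have := gun' j hc; linarith
        obtain ⟨i', hi'⟩ := hex'
        have hi'T : ¬ w i' < w' i' := fun hT => hple (hA i' j hT hi')
        exact hj i' (by simp [hi'T, hi'])
      have hp'j : p' j = 0 := by
        by_contra hne
        have hppos' : 0 < p' j := (pnn' j).lt_of_ne (Ne.symm hne)
        have hex' : ∃ i', μ' i' = some j := by
          by_contra hc; push_neg at hc
          have := gun' j hc; linarith
        obtain ⟨i', hi'⟩ := hex'
        by_cases hT : w i' < w' i'
        · have := hA i' j hT hi'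
          linarith [pnn j, hpj ▸ this]
        · exact hj i' (by simp [hT, hi'])
      simp [hpj, hp'j]
  · refine ⟨?_, ?_, ?_, ?_, ?_, ?_, ?_⟩
    · intro i i' j hi hi'
      simp only at hi hi'
      by_cases hT : w' i ≤ w i <;> by_cases hT' : w' i' ≤ w i' <;>
        simp only [hT, hT', if_true, if_false] at hi hi'
      · exact inj i i' j hi hi'
      · exfalso
        have hS : p' j < p j := hA i' j (not_le.mp hT') hi'
        exact absurd (hB i j hS hi) (not_lt.mpr hT)
      · exfalso
        have hS : p' j < p j := hA i j (not_le.mp hT) hi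
        exact absurd (hB i' j hS hi') (not_lt.mpr hT')
      · exact inj' i i' j hi hi'
    · intro j; exact le_min (pnn j) (pnn' j)
    · intro i; exact le_trans (wnn i) (le_max_left _ _)
    · intro i j hij
      simp only at hij ⊢
      by_cases hT : w' i ≤ w i <;> simp only [hT, if_true, if_false] at hij
      · have hS : ¬ p' j < p j := fun hS => absurd (hB i j hS hij) (not_lt.mpr hT)
        rw [min_eq_left (not_lt.mp hS), max_eq_left hT]
        exact meq i j hij
      · have hS : p' j < p j := hA i j (not_le.mp hT) hij
        rw [min_eq_right hS.le, max_eq_right (not_le.mp hT).le]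
        exact meq' i j hij
    · intro i j
      simp only
      rcases min_cases (p j) (p' j) with ⟨he, _⟩ | ⟨he, _⟩
      · rw [he]; exact le_trans (best i j) (le_max_left _ _)
      · rw [he]; exact le_trans (best' i j) (le_max_right _ _)
    · intro i hi
      simp only at hi ⊢
      by_cases hT : w' i ≤ w i <;> simp only [hT, if_true, if_false] at hi
      · have h0 := bun i hi
        rw [max_eq_left hT, h0]
      · have h0 := bun' i hi
        exact absurd (wnn i) (by rw [h0] at hT; exact fun hc => hT (by linarith))
    · intro j hj
      simp only at hj ⊢
      by_contra hne
      have hmin : 0 < min (p j) (p' j) :=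
        (le_min (pnn j) (pnn' j)).lt_of_ne (Ne.symm hne)
      have hppos : 0 < p j := lt_of_lt_of_le hmin (min_le_left _ _)
      have hppos' : 0 < p' j := lt_of_lt_of_le hmin (min_le_right _ _)
      have hex : ∃ i, μ i = some j := by
        by_contra hc; push_neg at hc
        have := gun j hc; linarith
      obtain ⟨i, hi⟩ := hex
      have hiT : ¬ w' i ≤ w i := fun hT => hj i (by simp [hT, hi])
      have hS : p' j < p j := hC i j (not_le.mp hiT) hi
      have hex' : ∃ i', μ' i' = some j := by
        by_contra hc; push_neg at hc
        have := gun' j hc; linarith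
      obtain ⟨i', hi'⟩ := hex'
      have hi'T : w' i' ≤ w i' := by
        by_contra hT
        exact hj i' (by simp [hT, hi'])
      exact absurd (hD i' j hS hi') (not_lt.mpr hi'T)
end

section
/- Every unit-demand market M = (I, J, {u_i^j}) with continuous, strictly decreasing utility functions that are eventually non-positive admits a competitive equilibrium. -/
attribute [local instance] Classical.propDecidable

section Auction

open Filter Topology

variable {I J : Type} [Fintype I] [Fintype J]

/-- Payoff of buyer `i` under matching `μ` at prices `p`. -/
noncomputable def payoffA (M : Market I J) (μ : I → Option J) (p : J → ℝ) (i : I) : ℝ :=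
  match μ i with
  | some j => M.u i j (p j)
  | none => 0

lemma payoffA_some {M : Market I J} {μ : I → Option J} {p : J → ℝ} {i : I} {j : J}
    (h : μ i = some j) : payoffA M μ p i = M.u i j (p j) := by
  simp [payoffA, h]

lemma payoffA_none {M : Market I J} {μ : I → Option J} {p : J → ℝ} {i : I}
    (h : μ i = none) : payoffA M μ p i = 0 := by
  simp [payoffA, h]

/-- Invariant of the discrete ascending auction with increment `ε`:
prices are `ε * n j`. -/
structure AState (M : Market I J) (ε : ℝ) (Nmax : ℕ) (μ : I → Option J) (n : J → ℕ) : Prop where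
  inj : ∀ i i' j, μ i = some j → μ i' = some j → i = i'
  unm : ∀ j, (∀ i, μ i ≠ some j) → n j = 0
  pos : ∀ i j, μ i = some j → 0 < M.u i j (ε * n j)
  bdd : ∀ j, n j ≤ Nmax
  env : ∀ i j j', μ i = some j → M.u i j' (ε * (n j' + 1)) ≤ M.u i j (ε * n j)

/-- No unmatched buyer can profitably outbid anywhere. -/
def NoBlock (M : Market I J) (ε : ℝ) (μ : I → Option J) (n : J → ℕ) : Prop :=
  ∀ i, (∀ j', μ i ≠ some j') → ∀ j, M.u i j (ε * (n j + 1)) ≤ 0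

lemma auction (M : Market I J) {B ε : ℝ} {Nmax : ℕ}
    (hB : ∀ i j y, B ≤ y → M.u i j y ≤ 0) (hε : 0 < ε) (hN : B ≤ ε * Nmax) :
    ∀ (m : ℕ) (μ : I → Option J) (n : J → ℕ), AState M ε Nmax μ n →
      (∑ j, (Nmax - n j)) ≤ m →
      ∃ μ' n', AState M ε Nmax μ' n' ∧ NoBlock M ε μ' n' := by
  intro m
  induction m with
  | zero =>
    intro μ n hst hm
    by_cases hblock : ∃ i, (∀ j', μ i ≠ some j') ∧ ∃ j, 0 < M.u i j (ε * (n j + 1))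
    · -- impossible: all prices are maxed out
      obtain ⟨i₀, _, j₁, hj₁⟩ := hblock
      have hlt : ε * (n j₁ + 1) < B := by
        by_contra hc
        push_neg at hc
        exact absurd (hB i₀ j₁ _ hc) (not_le.mpr hj₁)
      have hlt2 : (n j₁ : ℝ) + 1 < (Nmax : ℝ) := by
        have := lt_of_lt_of_le hlt hN
        exact lt_of_mul_lt_mul_left this hε.le
      have hlt3 : n j₁ < Nmax := by
        have h4 : (n j₁ : ℝ) < (Nmax : ℝ) := by linarith
        exact_mod_cast h4
      have hzero : Nmax - n j₁ = 0 := by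
        have := Finset.sum_eq_zero_iff.mp (Nat.le_zero.mp hm) j₁ (Finset.mem_univ _)
        exact this
      omega
    · push_neg at hblock
      exact ⟨μ, n, hst, fun i hi j => hblock i hi j⟩
  | succ m ih =>
    intro μ n hst hm
    by_cases hblock : ∃ i, (∀ j', μ i ≠ some j') ∧ ∃ j, 0 < M.u i j (ε * (n j + 1))
    · obtain ⟨i₀, hi₀, j₁, hj₁⟩ := hblock
      obtain ⟨j₀, -, hj₀⟩ := Finset.exists_max_image Finset.univ
        (fun j => M.u i₀ j (ε * (n j + 1))) ⟨j₁, Finset.mem_univ _⟩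
      have hval : 0 < M.u i₀ j₀ (ε * (n j₀ + 1)) :=
        lt_of_lt_of_le hj₁ (hj₀ j₁ (Finset.mem_univ _))
      have hlt : ε * (n j₀ + 1) < B := by
        by_contra hc
        push_neg at hc
        exact absurd (hB i₀ j₀ _ hc) (not_le.mpr hval)
      have hlt2 : (n j₀ : ℝ) + 1 < (Nmax : ℝ) := by
        have := lt_of_lt_of_le hlt hN
        exact lt_of_mul_lt_mul_left this hε.le
      have hle : n j₀ + 1 ≤ Nmax := by exact_mod_cast le_of_lt (by exact_mod_cast hlt2)
      set μ' : I → Option J :=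
        fun i => if i = i₀ then some j₀ else if μ i = some j₀ then none else μ i with hμ'def
      set n' : J → ℕ := Function.update n j₀ (n j₀ + 1) with hn'def
      have hn'j₀ : n' j₀ = n j₀ + 1 := Function.update_self _ _ _
      have hn'ne : ∀ j, j ≠ j₀ → n' j = n j := fun j hj => Function.update_of_ne hj _ _
      have hmono : ∀ j, n j ≤ n' j := by
        intro j
        by_cases hj : j = j₀
        · subst hj; rw [hn'j₀]; omega
        · rw [hn'ne j hj]
      have hμ'i₀ : μ' i₀ = some j₀ := by simp [hμ'def]
      have hμ'some : ∀ i j, μ' i = some j →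
          (i = i₀ ∧ j = j₀) ∨ (i ≠ i₀ ∧ μ i = some j ∧ j ≠ j₀) := by
        intro i j h
        by_cases hi : i = i₀
        · left
          refine ⟨hi, ?_⟩
          subst hi
          rw [hμ'i₀] at h
          exact (Option.some_inj.mp h).symm
        · right
          simp only [hμ'def, if_neg hi] at h
          by_cases hij : μ i = some j₀
          · simp [hij] at h
          · rw [if_neg hij] at h
            refine ⟨hi, h, ?_⟩
            intro hjj
            subst hjj
            exact hij h
      -- prices never move below their old values, utilities only drop
      have hanti : ∀ i j, M.u i j (ε * (n' j + 1)) ≤ M.u i j (ε * (n j + 1)) := by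
        intro i j
        apply (M.anti i j).antitone
        have := hmono j
        have : (n j : ℝ) ≤ (n' j : ℝ) := by exact_mod_cast this
        nlinarith [hε.le]
      have hst' : AState M ε Nmax μ' n' := by
        constructor
        · intro i i' j h h'
          rcases hμ'some _ _ h with ⟨hi, hj⟩ | ⟨hi, hmi, hj⟩ <;>
            rcases hμ'some _ _ h' with ⟨hi', hj'⟩ | ⟨hi', hmi', hj'⟩
          · rw [hi, hi']
          · exact absurd hj hj'.elim
          · exact absurd hj' hj.elim
          · exact hst.inj i i' j hmi hmi'
        · intro j hj
          have hjne : j ≠ j₀ := by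
            intro h; subst h; exact hj i₀ hμ'i₀
          rw [hn'ne j hjne]
          apply hst.unm
          intro i hmi
          by_cases hi : i = i₀
          · subst hi; exact hi₀ j hmi
          · have : μ' i = some j := by
              have hij : μ i ≠ some j₀ := by rw [hmi]; simp [hjne]
              simp only [hμ'def, if_neg hi, if_neg hij]
              exact hmi
            exact hj i this
        · intro i j h
          rcases hμ'some _ _ h with ⟨hi, hj⟩ | ⟨hi, hmi, hj⟩
          · rw [hi, hj, hn'j₀]
            have hcast : ((n j₀ + 1 : ℕ) : ℝ) = (n j₀ : ℝ) + 1 := by push_cast; ring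
            rw [hcast]
            exact hval
          · rw [hn'ne j hj]
            exact hst.pos i j hmi
        · intro j
          by_cases hj : j = j₀
          · subst hj; rw [hn'j₀]; exact hle
          · rw [hn'ne j hj]; exact hst.bdd j
        · intro i j j' h
          rcases hμ'some _ _ h with ⟨hi, hj⟩ | ⟨hi, hmi, hj⟩
          · rw [hi, hj, hn'j₀]
            have hcast : ((n j₀ + 1 : ℕ) : ℝ) = (n j₀ : ℝ) + 1 := by push_cast; ring
            rw [hcast]
            exact le_trans (hanti i₀ j') (hj₀ j' (Finset.mem_univ _))
          · rw [hn'ne j hj]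
            exact le_trans (hanti i j') (hst.env i j j' hmi)
      have hsum : (∑ j, (Nmax - n' j)) ≤ m := by
        have h1 : ∑ j ∈ Finset.univ.erase j₀, (Nmax - n' j) =
            ∑ j ∈ Finset.univ.erase j₀, (Nmax - n j) := by
          apply Finset.sum_congr rfl
          intro j hj
          rw [hn'ne j (Finset.ne_of_mem_erase hj)]
        have h2 : ∑ j ∈ Finset.univ.erase j₀, (Nmax - n' j) + (Nmax - n' j₀) =
            ∑ j, (Nmax - n' j) := Finset.sum_erase_add _ _ (Finset.mem_univ _)
        have h3 : ∑ j ∈ Finset.univ.erase j₀, (Nmax - n j) + (Nmax - n j₀) =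
            ∑ j, (Nmax - n j) := Finset.sum_erase_add _ _ (Finset.mem_univ _)
        rw [hn'j₀] at h2
        omega
      exact ih μ' n' hst' hsum
    · push_neg at hblock
      exact ⟨μ, n, hst, fun i hi j => hblock i hi j⟩

end Auction
/-- Every unit-demand market admits a competitive equilibrium. -/
theorem equilibrium_exists {I J : Type} [Fintype I] [Fintype J] (M : Market I J) :
    ∃ (p : J → ℝ) (w : I → ℝ) (μ : I → Option J), IsEquilib M p w μ := by
  classical
  open Filter Topology in
  -- a uniform bound `B` beyond which all utilities are non-positive
  choose x hx using M.evNonpos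
  set B : ℝ := ∑ i : I, ∑ j : J, max (x i j) 0 with hBdef
  have hB0 : 0 ≤ B :=
    Finset.sum_nonneg fun i _ => Finset.sum_nonneg fun j _ => le_max_right _ _
  have hB : ∀ i j y, B ≤ y → M.u i j y ≤ 0 := by
    intro i j y hy
    apply hx i j
    have h1 : max (x i j) 0 ≤ ∑ j' : J, max (x i j') 0 :=
      Finset.single_le_sum (f := fun j' => max (x i j') 0)
        (fun j' _ => le_max_right _ _) (Finset.mem_univ j)
    have h2 : ∑ j' : J, max (x i j') 0 ≤ B :=
      Finset.single_le_sum (f := fun i' => ∑ j' : J, max (x i' j') 0)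
        (fun i' (_ : i' ∈ Finset.univ) =>
          Finset.sum_nonneg fun j' _ => le_max_right (x i' j') 0)
        (Finset.mem_univ i)
    calc x i j ≤ max (x i j) 0 := le_max_left _ _
      _ ≤ B := le_trans h1 h2
      _ ≤ y := hy
  -- the increments and grid sizes
  set ek : ℕ → ℝ := fun k => ((k : ℝ) + 1)⁻¹ with hekdef
  have hek : ∀ k, 0 < ek k := fun k => by positivity
  set Nk : ℕ → ℕ := fun k => ⌈B * ((k : ℝ) + 1)⌉₊ with hNkdef
  have hNk : ∀ k, B ≤ ek k * Nk k := by
    intro k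
    have h1 : B * ((k : ℝ) + 1) ≤ (Nk k : ℝ) := Nat.le_ceil _
    have h2 : (0 : ℝ) < (k : ℝ) + 1 := by positivity
    rw [hekdef]
    rw [inv_mul_eq_div, le_div_iff₀ h2]
    linarith
  -- run the auction for each k
  have H : ∀ k : ℕ, ∃ μ n, AState M (ek k) (Nk k) μ n ∧ NoBlock M (ek k) μ n := by
    intro k
    have hstate : AState M (ek k) (Nk k) (fun _ => none) (fun _ => 0) := by
      constructor
      · intro i i' j h; simp at h
      · intro j _; rfl
      · intro i j h; simp at h
      · intro j; exact Nat.zero_le _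
      · intro i j j' h; simp at h
    exact auction M hB (hek k) (hNk k) (∑ _j : J, Nk k) _ _ hstate (le_of_eq (by simp))
  choose μs ns hA hNB using H
  set P : ℕ → J → ℝ := fun k j => ek k * (ns k j : ℝ) with hPdef
  have hP0 : ∀ k j, 0 ≤ P k j := fun k j => by positivity
  have hPB : ∀ k j, P k j ≤ B := by
    intro k j
    by_cases h : ∃ i, μs k i = some j
    · obtain ⟨i, hi⟩ := h
      have hpos := (hA k).pos i j hi
      by_contra hc
      push_neg at hc
      exact absurd (hB i j _ hc.le) (not_le.mpr hpos)
    · push_neg at h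
      have := (hA k).unm j h
      rw [hPdef]
      simp only [this, Nat.cast_zero, mul_zero]
      exact hB0
  have hkey : ∀ k i j, M.u i j (P k j + ek k) ≤ payoffA M (μs k) (P k) i := by
    intro k i j
    have harg : ek k * ((ns k j : ℝ) + 1) = P k j + ek k := by rw [hPdef]; ring
    cases hμ : μs k i with
    | none =>
      rw [payoffA_none hμ]
      have hun : ∀ j', μs k i ≠ some j' := by simp [hμ]
      have := hNB k i hun j
      rwa [harg] at this
    | some j' =>
      rw [payoffA_some hμ]
      have := (hA k).env i j' j hμ
      rwa [harg] at this
  -- pigeonhole: a matching occurring infinitely often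
  obtain ⟨μstar, hfib⟩ := Finite.exists_infinite_fiber μs
  have hset : {k | μs k = μstar}.Infinite := by
    rw [← Set.infinite_coe_iff] at *
    exact hfib
  set Q : ℕ → ℕ := Nat.nth (fun k => μs k = μstar) with hQdef
  have hQmono : StrictMono Q := Nat.nth_strictMono hset
  have hQmem : ∀ t, μs (Q t) = μstar := fun t => Nat.nth_mem_of_infinite hset t
  -- extract a convergent subsequence of prices
  have hcomp : IsCompact (Set.univ.pi fun _ : J => Set.Icc (0 : ℝ) B) :=
    isCompact_univ_pi fun _ => isCompact_Icc
  have hmem : ∀ t, (P (Q t)) ∈ (Set.univ.pi fun _ : J => Set.Icc (0 : ℝ) B) := by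
    intro t
    rw [Set.mem_univ_pi]
    exact fun j => ⟨hP0 _ _, hPB _ _⟩
  obtain ⟨p, -, φ, hφ, hconv⟩ := hcomp.tendsto_subseq hmem
  set R : ℕ → ℕ := fun t => Q (φ t) with hRdef
  have hR : StrictMono R := hQmono.comp hφ
  have hRμ : ∀ t, μs (R t) = μstar := fun t => hQmem (φ t)
  have hcoord : ∀ j, Tendsto (fun t => P (R t) j) atTop (𝓝 (p j)) := by
    intro j
    exact tendsto_pi_nhds.mp hconv j
  have heps : Tendsto (fun t => ek (R t)) atTop (𝓝 0) := by
    have h1 : Tendsto (fun m : ℕ => ((m : ℝ) + 1)) atTop atTop :=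
      Filter.tendsto_atTop_add_const_right _ 1 tendsto_natCast_atTop_atTop
    have h2 : Tendsto ek atTop (𝓝 0) := tendsto_inv_atTop_zero.comp h1
    exact h2.comp hR.tendsto_atTop
  -- the limit outcome
  refine ⟨p, payoffA M μstar p, μstar, ?_, ?_, ?_, ?_, ?_, ?_, ?_⟩
  · -- injectivity
    intro i i' j h h'
    refine (hA (R 0)).inj i i' j ?_ ?_ <;> rw [hRμ 0]
    · exact h
    · exact h'
  · -- prices nonnegative
    intro j
    exact ge_of_tendsto' (hcoord j) fun t => hP0 _ _
  · -- payoffs nonnegative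
    intro i
    cases hμ : μstar i with
    | none => rw [payoffA_none hμ]
    | some j =>
      rw [payoffA_some hμ]
      have hlim : Tendsto (fun t => M.u i j (P (R t) j)) atTop (𝓝 (M.u i j (p j))) :=
        ((M.cont i j).tendsto (p j)).comp (hcoord j)
      refine ge_of_tendsto' hlim fun t => ?_
      have hmi : μs (R t) i = some j := by rw [hRμ t]; exact hμ
      exact ((hA (R t)).pos i j hmi).le
  · -- matched buyers get their payoff
    intro i j h
    rw [payoffA_some h]
  · -- optimality
    intro i j
    have hL : Tendsto (fun t => M.u i j (P (R t) j + ek (R t))) atTop (𝓝 (M.u i j (p j))) := by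
      have hadd : Tendsto (fun t => P (R t) j + ek (R t)) atTop (𝓝 (p j + 0)) :=
        (hcoord j).add heps
      rw [add_zero] at hadd
      exact ((M.cont i j).tendsto (p j)).comp hadd
    have hRt : Tendsto (fun t => payoffA M μstar (P (R t)) i) atTop
        (𝓝 (payoffA M μstar p i)) := by
      cases hμ : μstar i with
      | none => simp only [payoffA_none hμ]; exact tendsto_const_nhds
      | some j' =>
        simp only [payoffA_some hμ]
        exact ((M.cont i j').tendsto (p j')).comp (hcoord j')
    refine le_of_tendsto_of_tendsto' hL hRt fun t => ?_
    have hk := hkey (R t) i j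
    rwa [hRμ t] at hk
  · -- unmatched buyers get zero
    intro i h
    rw [payoffA_none h]
  · -- unmatched goods have zero price
    intro j hj
    have hz : ∀ t, P (R t) j = 0 := by
      intro t
      have hun : ∀ i, μs (R t) i ≠ some j := by
        intro i; rw [hRμ t]; exact hj i
      have := (hA (R t)).unm j hun
      rw [hPdef]
      simp [this]
    have h0 : Tendsto (fun t => P (R t) j) atTop (𝓝 (0 : ℝ)) := by
      have hfun : (fun t => P (R t) j) = fun _ => (0 : ℝ) := funext fun t => hz t
      rw [hfun]
      exact tendsto_const_nhds
    exact tendsto_nhds_unique (hcoord j) h0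
end

section
/- (Entanglement) Let W and W' be two competitive equilibria of a unit-demand market. If buyer i is matched to good j in W, then the price of j and the payoff of i are oppositely ordered across the two equilibria: p^j(W') > p^j(W) implies u_i(W') < u_i(W), and p^j(W') < p^j(W) implies u_i(W') > u_i(W), and p^j(W') = p^j(W) implies u_i(W') = u_i(W); this holds regardless of whether i and j are matched in W'. -/
attribute [local instance] Classical.propDecidable

lemma entanglement_key {I J : Type} [Fintype I] [Fintype J] (M : Market I J)
    (p1 p2 : J → ℝ) (w1 w2 : I → ℝ) (μ1 μ2 : I → Option J)
    (h1 : IsEquilib M p1 w1 μ1) (h2 : IsEquilib M p2 w2 μ2) :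
    (∀ i j, μ1 i = some j → p1 j < p2 j → w2 i < w1 i) ∧
    (∀ i, w2 i < w1 i → ∃ j, μ2 i = some j ∧ p1 j < p2 j) := by
  classical
  obtain ⟨inj1, hp1, hw1, hmu1, hle1, hun1, hgp1⟩ := h1
  obtain ⟨inj2, hp2, hw2, hmu2, hle2, hun2, hgp2⟩ := h2
  set A : Finset I := Finset.univ.filter (fun i => w2 i < w1 i) with hAdef
  set T : Finset J := Finset.univ.filter (fun j => p1 j < p2 j) with hTdef
  have hfa : ∀ i ∈ A, ∃ j, μ1 i = some j ∧ p1 j < p2 j := by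
    intro i hi
    have hlt : w2 i < w1 i := (Finset.mem_filter.mp hi).2
    have hpos : 0 < w1 i := lt_of_le_of_lt (hw2 i) hlt
    obtain ⟨j, hj⟩ : ∃ j, μ1 i = some j := by
      cases hmu : μ1 i with
      | none => exact absurd (hun1 i hmu) (by linarith)
      | some j => exact ⟨j, rfl⟩
    refine ⟨j, hj, ?_⟩
    have e1 : w1 i = M.u i j (p1 j) := hmu1 i j hj
    have e2 : M.u i j (p2 j) ≤ w2 i := hle2 i j
    exact (M.anti i j).lt_iff_gt.mp (by linarith)
  have hfb : ∀ j ∈ T, ∃ i, μ2 i = some j ∧ w2 i < w1 i := by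
    intro j hj
    have hlt : p1 j < p2 j := (Finset.mem_filter.mp hj).2
    have hpos : 0 < p2 j := lt_of_le_of_lt (hp1 j) hlt
    obtain ⟨i, hi⟩ : ∃ i, μ2 i = some j := by
      by_contra hcon
      push_neg at hcon
      have := hgp2 j hcon
      linarith
    refine ⟨i, hi, ?_⟩
    have e1 : w2 i = M.u i j (p2 j) := hmu2 i j hi
    have e2 : M.u i j (p1 j) ≤ w1 i := hle1 i j
    have : M.u i j (p2 j) < M.u i j (p1 j) := (M.anti i j) hlt
    linarith
  -- μ1 maps A injectively into T (via some)
  have himg1 : A.image μ1 ⊆ T.image some := by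
    intro o ho
    obtain ⟨a, ha, rfl⟩ := Finset.mem_image.mp ho
    obtain ⟨j, hj, hjT⟩ := hfa a ha
    rw [hj]
    exact Finset.mem_image_of_mem some (Finset.mem_filter.mpr ⟨Finset.mem_univ _, hjT⟩)
  have hinj1 : Set.InjOn μ1 (A : Set I) := by
    intro a ha b hb hab
    obtain ⟨j, hj, _⟩ := hfa a (by simpa using ha)
    exact inj1 a b j hj (by rw [← hab]; exact hj)
  have card1 : (A.image μ1).card = A.card := Finset.card_image_of_injOn hinj1
  have cardTs : (T.image some).card = T.card :=
    Finset.card_image_of_injective _ (Option.some_injective _)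
  -- choice function g : T → A (via some)
  set g : J → Option I := fun j =>
    if h : ∃ i, μ2 i = some j ∧ w2 i < w1 i then some h.choose else none with hgdef
  have hg : ∀ j ∈ T, ∃ i, g j = some i ∧ μ2 i = some j ∧ w2 i < w1 i := by
    intro j hj
    have h := hfb j hj
    exact ⟨h.choose, by simp only [hgdef, dif_pos h], h.choose_spec⟩
  have himg2 : T.image g ⊆ A.image some := by
    intro o ho
    obtain ⟨j, hj, rfl⟩ := Finset.mem_image.mp ho
    obtain ⟨i, he, hmi, hwi⟩ := hg j hj
    rw [he]
    exact Finset.mem_image_of_mem some (Finset.mem_filter.mpr ⟨Finset.mem_univ _, hwi⟩)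
  have hinj2 : Set.InjOn g (T : Set J) := by
    intro a ha b hb hab
    obtain ⟨ia, hea, hma, _⟩ := hg a (by simpa using ha)
    obtain ⟨ib, heb, hmb, _⟩ := hg b (by simpa using hb)
    rw [hea, heb] at hab
    have : ia = ib := Option.some.inj hab
    subst this
    exact Option.some.inj ((hma.symm).trans hmb)
  have card2 : (T.image g).card = T.card := Finset.card_image_of_injOn hinj2
  have cardAs : (A.image some).card = A.card :=
    Finset.card_image_of_injective _ (Option.some_injective _)
  have hcard : A.card = T.card := by
    have h1' : A.card ≤ T.card := by
      have := Finset.card_le_card himg1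
      rw [card1, cardTs] at this; exact this
    have h2' : T.card ≤ A.card := by
      have := Finset.card_le_card himg2
      rw [card2, cardAs] at this; exact this
    omega
  have eq1 : A.image μ1 = T.image some :=
    Finset.eq_of_subset_of_card_le himg1 (by rw [card1, cardTs]; omega)
  have eq2 : T.image g = A.image some :=
    Finset.eq_of_subset_of_card_le himg2 (by rw [card2, cardAs]; omega)
  constructor
  · intro i j hj hpj
    have hjT : j ∈ T := Finset.mem_filter.mpr ⟨Finset.mem_univ _, hpj⟩
    have : (some j : Option J) ∈ A.image μ1 := by
      rw [eq1]; exact Finset.mem_image_of_mem some hjT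
    obtain ⟨a, haA, hae⟩ := Finset.mem_image.mp this
    have : a = i := inj1 a i j hae hj
    subst this
    exact (Finset.mem_filter.mp haA).2
  · intro i hwi
    have hiA : i ∈ A := Finset.mem_filter.mpr ⟨Finset.mem_univ _, hwi⟩
    have : (some i : Option I) ∈ T.image g := by
      rw [eq2]; exact Finset.mem_image_of_mem some hiA
    obtain ⟨j, hjT, hge⟩ := Finset.mem_image.mp this
    obtain ⟨i', he, hmi, _⟩ := hg j hjT
    rw [he] at hge
    have : i' = i := Option.some.inj hge
    subst this
    exact ⟨j, hmi, (Finset.mem_filter.mp hjT).2⟩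

/-- Entanglement: if buyer `i` is matched to good `j` in equilibrium `W`, then
across any other equilibrium `W'` the price of `j` and the payoff of `i` are
oppositely ordered. -/
theorem entanglement {I J : Type} [Fintype I] [Fintype J] (M : Market I J)
    (p p' : J → ℝ) (w w' : I → ℝ) (μ μ' : I → Option J)
    (h : IsEquilib M p w μ) (h' : IsEquilib M p' w' μ')
    (i : I) (j : J) (hm : μ i = some j) :
    (p j < p' j → w' i < w i) ∧ (p' j < p j → w i < w' i) ∧
    (p j = p' j → w i = w' i) := by
  have key1 := entanglement_key M p p' w w' μ μ' h h'
  have key2 := entanglement_key M p' p w' w μ' μ h' h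
  have ewi : w i = M.u i j (p j) := h.2.2.2.1 i j hm
  have hle' : M.u i j (p' j) ≤ w' i := h'.2.2.2.2.1 i j
  refine ⟨fun hlt => key1.1 i j hm hlt, fun hlt => ?_, fun heq => ?_⟩
  · have : M.u i j (p j) < M.u i j (p' j) := (M.anti i j) hlt
    linarith
  · have hle : w i ≤ w' i := by rw [ewi, heq]; exact hle'
    rcases eq_or_lt_of_le hle with h1 | h1
    · exact h1
    · obtain ⟨j', hmj', hpj'⟩ := key2.2 i h1
      have : j' = j := Option.some.inj ((hmj'.symm).trans hm)
      subst this
      exact absurd heq (by linarith)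
end

section
/- (Conservation of Matching) In a unit-demand market, if some competitive equilibrium W gives buyer i a strictly positive payoff, then buyer i is matched in every competitive equilibrium of the market. Symmetrically, if some competitive equilibrium gives good j a strictly positive price, then good j is matched in every competitive equilibrium. -/
attribute [local instance] Classical.propDecidable

lemma key_lemma {I J : Type} [Fintype I] [Fintype J] (M : Market I J)
    (p : J → ℝ) (w : I → ℝ) (μ : I → Option J)
    (p' : J → ℝ) (w' : I → ℝ) (μ' : I → Option J)
    (h : IsEquilib M p w μ) (h' : IsEquilib M p' w' μ')
    (j0 : J) (hj0 : p j0 < p' j0) :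
    ∃ i j1, μ i = some j0 ∧ μ' i = some j1 ∧ p j1 < p' j1 := by
  classical
  obtain ⟨hinj, hp, hw, hmat, hbest, hunm, hung⟩ := h
  obtain ⟨hinj', hp', hw', hmat', hbest', hunm', hung'⟩ := h'
  set S : Finset J := Finset.univ.filter (fun j => p j < p' j) with hS
  have hj0S : j0 ∈ S := by simp [hS, hj0]
  have hA : ∀ j ∈ S, ∃ i, μ' i = some j := by
    intro j hj
    by_contra hc
    push_neg at hc
    have h0 := hung' j hc
    have hjS : p j < p' j := by simpa [hS] using hj
    linarith [hp j]
  have hB : ∀ i j, j ∈ S → μ' i = some j → ∃ k, k ∈ S ∧ μ i = some k := by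
    intro i j hj hij
    have hjS : p j < p' j := by simpa [hS] using hj
    have h1 : w' i = M.u i j (p' j) := hmat' i j hij
    have h2 : M.u i j (p' j) < M.u i j (p j) := (M.anti i j) hjS
    have h3 : M.u i j (p j) ≤ w i := hbest i j
    cases hμi : μ i with
    | none => exact absurd (hunm i hμi) (by have := hw' i; intro hz; linarith)
    | some k =>
      refine ⟨k, ?_, rfl⟩
      have h4 : w i = M.u i k (p k) := hmat i k hμi
      have h5 : M.u i k (p' k) ≤ w' i := hbest' i k
      have h6 : M.u i k (p' k) < M.u i k (p k) := by linarith
      have hk : p k < p' k := (M.anti i k).lt_iff_gt.mp h6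
      simp [hS, hk]
  choose ib hib using hA
  choose kb hkbS hkb using hB
  have hsurj := Finset.surj_on_of_inj_on_of_card_le
    (f := fun j (hj : j ∈ S) => kb (ib j hj) j hj (hib j hj))
    (fun j hj => hkbS _ _ hj (hib j hj))
    (fun j1 j2 hj1 hj2 heq => by
      have e1 := hkb (ib j1 hj1) j1 hj1 (hib j1 hj1)
      have e2 := hkb (ib j2 hj2) j2 hj2 (hib j2 hj2)
      rw [← heq] at e2
      have hbb : ib j1 hj1 = ib j2 hj2 := hinj _ _ _ e1 e2
      have m1 := hib j1 hj1
      have m2 := hib j2 hj2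
      rw [hbb, m2] at m1
      exact (Option.some_inj.mp m1).symm)
    (le_refl S.card)
  obtain ⟨j1, hj1, hj1eq⟩ := hsurj j0 hj0S
  refine ⟨ib j1 hj1, j1, ?_, hib j1 hj1, by simpa [hS] using hj1⟩
  rw [hj1eq]
  exact hkb (ib j1 hj1) j1 hj1 (hib j1 hj1)

/-- Conservation of matching: a buyer with strictly positive payoff in some
equilibrium is matched in every equilibrium, and a good with strictly positive
price in some equilibrium is matched in every equilibrium. -/
theorem conservation_of_matching {I J : Type} [Fintype I] [Fintype J] (M : Market I J) :
    (∀ (p : J → ℝ) (w : I → ℝ) (μ : I → Option J) (p' : J → ℝ) (w' : I → ℝ)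
        (μ' : I → Option J) (i : I),
      IsEquilib M p w μ → IsEquilib M p' w' μ' → 0 < w i → μ' i ≠ none) ∧
    (∀ (p : J → ℝ) (w : I → ℝ) (μ : I → Option J) (p' : J → ℝ) (w' : I → ℝ)
        (μ' : I → Option J) (j : J),
      IsEquilib M p w μ → IsEquilib M p' w' μ' → 0 < p j → ∃ i, μ' i = some j) := by
  constructor
  · intro p w μ p' w' μ' i h h' hwi hnone
    obtain ⟨hinj, hp, hw, hmat, hbest, hunm, hung⟩ := h
    obtain ⟨hinj', hp', hw', hmat', hbest', hunm', hung'⟩ := h'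
    have hw'i : w' i = 0 := hunm' i hnone
    cases hμi : μ i with
    | none => exact absurd (hunm i hμi) (by linarith)
    | some j0 =>
      have h1 : w i = M.u i j0 (p j0) := hmat i j0 hμi
      have h2 : M.u i j0 (p' j0) ≤ w' i := hbest' i j0
      have h3 : M.u i j0 (p' j0) < M.u i j0 (p j0) := by linarith
      have hj0 : p j0 < p' j0 := (M.anti i j0).lt_iff_gt.mp h3
      obtain ⟨i1, j1, e1, e2, _⟩ := key_lemma M p w μ p' w' μ'
        ⟨hinj, hp, hw, hmat, hbest, hunm, hung⟩
        ⟨hinj', hp', hw', hmat', hbest', hunm', hung'⟩ j0 hj0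
      have : i1 = i := hinj i1 i j0 e1 hμi
      rw [this, hnone] at e2
      simp at e2
  · intro p w μ p' w' μ' j h h' hpj
    by_contra hc
    push_neg at hc
    have hp'j : p' j = 0 := h'.2.2.2.2.2.2 j hc
    have hj : p' j < p j := by linarith
    obtain ⟨i, j1, e1, _, _⟩ := key_lemma M p' w' μ' p w μ h' h j hj
    exact hc i e1
end

section
/- (Two-sided reduction) Given a two-sided market M = (I, J, {u_i^j}, {q_i^j}) where matched pair (i, j) with transfer x gives i utility u_i^j(x) and j utility q_i^j(−x), define the buyer/good market M' = (I, J, {u'_i^j}) with u'_i^j(y) = u_i^j(−(q_i^j)^{-1}(y)). Then every competitive equilibrium of M' (with good 'prices' interpreted as agents-J payoffs) corresponds to a competitive equilibrium of M with the same payoffs for all agents, and conversely. -/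
attribute [local instance] Classical.propDecidable

/-- A two-sided matching market: agents `I` and `J`; if `i` and `j` are matched
with transfer `x` from `i` to `j`, agent `i` gets utility `u i j x` and agent
`j` gets utility `q i j (-x)`. -/
structure TwoMarket (I J : Type) [Fintype I] [Fintype J] where
  u : I → J → ℝ → ℝ
  q : I → J → ℝ → ℝ
  u_cont : ∀ i j, Continuous (u i j)
  u_anti : ∀ i j, StrictAnti (u i j)
  u_surj : ∀ i j, Function.Surjective (u i j)
  u_evNonpos : ∀ i j, ∃ x : ℝ, ∀ y ≥ x, u i j y ≤ 0
  q_cont : ∀ i j, Continuous (q i j)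
  q_anti : ∀ i j, StrictAnti (q i j)
  q_surj : ∀ i j, Function.Surjective (q i j)
  q_evNonpos : ∀ i j, ∃ x : ℝ, ∀ y ≥ x, q i j y ≤ 0

/-- A competitive equilibrium of a two-sided market: a partial matching `μ`
with transfers `x`, payoff vectors `uI`, `uJ`; payoffs of matched pairs are
realized by the transfer, payoffs are nonnegative, unmatched agents get `0`,
and no pair `(i, j)` can both strictly improve with some transfer `t`. -/
def IsTwoCE {I J : Type} [Fintype I] [Fintype J] (T : TwoMarket I J)
    (μ : I → Option J) (x : I → ℝ) (uI : I → ℝ) (uJ : J → ℝ) : Prop :=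
  (∀ i i' j, μ i = some j → μ i' = some j → i = i') ∧
  (∀ i, 0 ≤ uI i) ∧ (∀ j, 0 ≤ uJ j) ∧
  (∀ i j, μ i = some j → uI i = T.u i j (x i) ∧ uJ j = T.q i j (-(x i))) ∧
  (∀ i, μ i = none → uI i = 0) ∧
  (∀ j, (∀ i, μ i ≠ some j) → uJ j = 0) ∧
  (∀ i j t, T.u i j t ≤ uI i ∨ T.q i j (-t) ≤ uJ j)

/-- Two-sided reduction: let `M'` be the buyer/good market whose utilities
satisfy `u'_i^j(q_i^j(-x)) = u_i^j(x)` (i.e. `u'_i^j = u_i^j ∘ (-(q_i^j)⁻¹)`).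
Then every competitive equilibrium of `M'` — with prices interpreted as the
payoffs of the agents in `J` — yields a competitive equilibrium of the
two-sided market `T` with the same payoffs, and conversely. -/
theorem two_sided_reduction {I J : Type} [Fintype I] [Fintype J]
    (T : TwoMarket I J) (M' : Market I J)
    (hM' : ∀ i j x, M'.u i j (T.q i j (-x)) = T.u i j x) :
    (∀ (pJ : J → ℝ) (uI : I → ℝ) (μ : I → Option J), IsEquilib M' pJ uI μ →
      ∃ x : I → ℝ, IsTwoCE T μ x uI pJ) ∧
    (∀ (μ : I → Option J) (x : I → ℝ) (uI : I → ℝ) (uJ : J → ℝ),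
      IsTwoCE T μ x uI uJ → IsEquilib M' uJ uI μ) := by

  constructor
  · intro pJ uI μ hE
    obtain ⟨hinj, hp0, hw0, hmatch, hbest, hnone, hjnone⟩ := hE
    refine ⟨fun i => (μ i).elim 0 (fun j => -(Function.invFun (T.q i j) (pJ j))), hinj, hw0, hp0, ?_, hnone, hjnone, ?_⟩
    · intro i j hij
      have hq : T.q i j (Function.invFun (T.q i j) (pJ j)) = pJ j :=
        Function.rightInverse_invFun (T.q_surj i j) (pJ j)
      have hx : ((μ i).elim 0 (fun j => -(Function.invFun (T.q i j) (pJ j))) : ℝ)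
          = -(Function.invFun (T.q i j) (pJ j)) := by rw [hij]; rfl
      constructor
      · rw [hmatch i j hij, ← hM']
        simp only [hx, neg_neg, hq]
      · simp only [hx, neg_neg, hq]
    · intro i j t
      by_cases h : T.q i j (-t) ≤ pJ j
      · exact Or.inr h
      · left
        push_neg at h
        have := (M'.anti i j) h
        rw [hM'] at this
        exact le_trans this.le (hbest i j)
  · intro μ x uI uJ hC
    obtain ⟨hinj, hI0, hJ0, hmatch, hnone, hjnone, hblock⟩ := hC
    refine ⟨hinj, hJ0, hI0, ?_, ?_, hnone, hjnone⟩
    · intro i j hij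
      obtain ⟨h1, h2⟩ := hmatch i j hij
      rw [h1, h2, hM']
    · intro i j
      by_contra h
      push_neg at h
      obtain ⟨y, hy⟩ := M'.surj i j ((uI i + M'.u i j (uJ j)) / 2)
      have hylt : M'.u i j y < M'.u i j (uJ j) := by rw [hy]; linarith
      have hygt : uI i < M'.u i j y := by rw [hy]; linarith
      have hyj : uJ j < y := (M'.anti i j).lt_iff_gt.mp hylt
      obtain ⟨t, ht⟩ := T.q_surj i j y
      have hq : T.q i j (-(-t)) = y := by rw [neg_neg]; exact ht
      have hu : T.u i j (-t) = M'.u i j y := by rw [← hM', hq]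
      rcases hblock i j (-t) with h1 | h1
      · rw [hu] at h1; linarith
      · rw [hq] at h1; linarith
end
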